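/- Let T be a nonempty finite index set, let g_t(λ) = c_t + λ·d_t (c_t, d_t ∈ ℝ) be affine functions for t ∈ T, and let φ(λ) = max_{t∈T} g_t(λ). Assume φ(λ) > 0 for all λ ∈ ℝ, and let a, b ∈ ℝ. Then there exist real numbers λ₁ ≤ λ₂ such that the function f(λ) = (a + λ·b)/φ(λ) is monotone on (−∞, λ₁], monotone on [λ₁, λ₂], and monotone on [λ₂, +∞). -/

import Mathlib

namespace AffEnvAux

/-- Abbreviation for the target conclusion. -/
def ThreePieces (f : ℝ → ℝ) : Prop :=
  ∃ l1 l2 : ℝ, l1 ≤ l2 ∧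
    (MonotoneOn f (Set.Iic l1) ∨ AntitoneOn f (Set.Iic l1)) ∧
    (MonotoneOn f (Set.Icc l1 l2) ∨ AntitoneOn f (Set.Icc l1 l2)) ∧
    (MonotoneOn f (Set.Ici l2) ∨ AntitoneOn f (Set.Ici l2))

variable {f : ℝ → ℝ}

lemma claimA (hqc : ∀ x y z : ℝ, x < y → y < z → min (f x) (f z) ≤ f y)
    {u v : ℝ} (huv : u < v) (hd : f v < f u) : AntitoneOn f (Set.Ici v) := by
  intro y hy z hz hyz
  rcases eq_or_lt_of_le hyz with rfl | hyz'
  · exact le_rfl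
  by_contra h
  push_neg at h
  have huy : u < y := lt_of_lt_of_le huv hy
  have h1 : min (f u) (f z) ≤ f y := hqc u y z huy hyz'
  rcases le_total (f u) (f z) with h' | h'
  · have hfu : f u ≤ f y := by rwa [min_eq_left h'] at h1
    rcases eq_or_lt_of_le (Set.mem_Ici.mp hy) with rfl | hvy
    · linarith
    · have h2 : min (f u) (f y) ≤ f v := hqc u v y huv hvy
      rw [min_eq_left hfu] at h2
      linarith
  · have : f z ≤ f y := by rwa [min_eq_right h'] at h1
    linarith

lemma claimA' (hqc : ∀ x y z : ℝ, x < y → y < z → min (f x) (f z) ≤ f y)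
    {p q : ℝ} (hpq : p < q) (hi : f p < f q) : MonotoneOn f (Set.Iic p) := by
  intro x hx y hy hxy
  rcases eq_or_lt_of_le hxy with rfl | hxy'
  · exact le_rfl
  by_contra h
  push_neg at h
  have hyq : y < q := lt_of_le_of_lt hy hpq
  have h1 : min (f x) (f q) ≤ f y := hqc x y q hxy' hyq
  rcases le_total (f x) (f q) with h' | h'
  · rw [min_eq_left h'] at h1; linarith
  · have hq : f q ≤ f y := by rwa [min_eq_right h'] at h1
    rcases eq_or_lt_of_le (Set.mem_Iic.mp hy) with rfl | hyp
    · linarith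
    · have h2 : min (f y) (f q) ≤ f p := hqc y p q hyp hpq
      rw [min_eq_right hq] at h2
      linarith

lemma trichotomy (hf : Continuous f)
    (hqc : ∀ x y z : ℝ, x < y → y < z → min (f x) (f z) ≤ f y) :
    (∃ m, MonotoneOn f (Set.Iic m) ∧ AntitoneOn f (Set.Ici m)) ∨ Monotone f ∨ Antitone f := by
  by_cases hM : Monotone f
  · exact Or.inr (Or.inl hM)
  by_cases hA : Antitone f
  · exact Or.inr (Or.inr hA)
  left
  rw [Monotone] at hM; push_neg at hM
  obtain ⟨u, v, huv, hd⟩ := hM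
  have huv' : u < v := lt_of_le_of_ne huv (by rintro rfl; exact absurd hd (lt_irrefl _))
  rw [Antitone] at hA; push_neg at hA
  obtain ⟨p, q, hpq, hi⟩ := hA
  have hpq' : p < q := lt_of_le_of_ne hpq (by rintro rfl; exact absurd hi (lt_irrefl _))
  have hAv := claimA hqc huv' hd
  have hMp := claimA' hqc hpq' hi
  have hpv : p < v := by
    by_contra hvp
    push_neg at hvp
    have := hAv (Set.mem_Ici.mpr hvp) (Set.mem_Ici.mpr (le_trans hvp hpq)) hpq
    linarith
  obtain ⟨m, hm, hmax⟩ :=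
    isCompact_Icc.exists_isMaxOn (Set.nonempty_Icc.2 (le_of_lt hpv)) hf.continuousOn
  have hmax' : ∀ x ∈ Set.Icc p v, f x ≤ f m := hmax
  have hmp : p ≤ m := hm.1
  have hmv : m ≤ v := hm.2
  have hleft : ∀ x, x ≤ m → f x ≤ f m := by
    intro x hx
    rcases le_total p x with h | h
    · exact hmax' x ⟨h, le_trans hx hmv⟩
    · exact le_trans (hMp (Set.mem_Iic.mpr h) (Set.mem_Iic.mpr le_rfl) h) (hmax' p ⟨le_rfl, le_of_lt hpv⟩)
  have hright : ∀ z, m ≤ z → f z ≤ f m := by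
    intro z hz
    rcases le_total z v with h | h
    · exact hmax' z ⟨le_trans hmp hz, h⟩
    · exact le_trans (hAv (Set.mem_Ici.mpr le_rfl) (Set.mem_Ici.mpr h) h) (hmax' v ⟨le_of_lt hpv, le_rfl⟩)
  refine ⟨m, ?_, ?_⟩
  · intro x hx y hy hxy
    rcases eq_or_lt_of_le hxy with rfl | hxy'
    · exact le_rfl
    rcases eq_or_lt_of_le (Set.mem_Iic.mp hy) with rfl | hym
    · exact hleft x (le_of_lt hxy')
    · have := hqc x y m hxy' hym
      rwa [min_eq_left (hleft x (by linarith))] at this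
  · intro y hy z hz hyz
    rcases eq_or_lt_of_le hyz with rfl | hyz'
    · exact le_rfl
    rcases eq_or_lt_of_le (Set.mem_Ici.mp hy) with h | hmy
    · exact h ▸ hright z (h ▸ le_of_lt hyz')
    · have := hqc m y z hmy hyz'
      rwa [min_eq_right (hright z (by linarith))] at this

lemma monotoneOn_Icc_self {r : ℝ} : MonotoneOn f (Set.Icc r r) := by
  intro x hx y hy _
  have hx' : x = r := le_antisymm hx.2 hx.1
  have hy' : y = r := le_antisymm hy.2 hy.1
  rw [hx', hy']

lemma halfRight (hf : Continuous f) {r : ℝ} (h0 : f r = 0)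
    (hnn : ∀ x, r ≤ x → 0 ≤ f x)
    (hqc : ∀ x y z : ℝ, r ≤ x → x < y → y < z → min (f x) (f z) ≤ f y) :
    ∃ m, r ≤ m ∧ MonotoneOn f (Set.Icc r m) ∧
      (AntitoneOn f (Set.Ici m) ∨ MonotoneOn f (Set.Ici m)) := by
  set F : ℝ → ℝ := fun x => f (max x r) with hF
  have hFc : Continuous F := hf.comp (continuous_id.max continuous_const)
  have hFeq : ∀ x, r ≤ x → F x = f x := by
    intro x hx; simp [hF, max_eq_left hx]
  have hFqc : ∀ x y z : ℝ, x < y → y < z → min (F x) (F z) ≤ F y := by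
    intro x y z hxy hyz
    rcases le_or_gt y r with hyr | hry
    · have hx : F x = f r := by
        simp [hF, max_eq_right (le_of_lt (lt_of_lt_of_le hxy hyr))]
      have hy : F y = f r := by simp [hF, max_eq_right hyr]
      rw [hx, hy]
      exact min_le_left _ _
    · have hy : F y = f y := hFeq y (le_of_lt hry)
      have hynn : 0 ≤ f y := hnn y (le_of_lt hry)
      rcases le_or_gt x r with hxr | hrx
      · have hx : F x = f r := by simp [hF, max_eq_right hxr]
        rw [hx, h0, hy]
        exact le_trans (min_le_left _ _) hynn
      · have hz : F z = f z := hFeq z (le_of_lt (lt_trans hry hyz))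
        rw [hFeq x (le_of_lt hrx), hy, hz]
        exact hqc x y z (le_of_lt hrx) hxy hyz
  rcases trichotomy hFc hFqc with ⟨m, hmono, hanti⟩ | hM | hA
  · rcases le_or_gt m r with hmr | hrm
    · refine ⟨r, le_rfl, monotoneOn_Icc_self, Or.inl ?_⟩
      intro x hx y hy hxy
      have := hanti (le_trans hmr hx) (le_trans hmr hy) hxy
      rwa [hFeq x hx, hFeq y hy] at this
    · refine ⟨m, le_of_lt hrm, ?_, Or.inl ?_⟩
      · intro x hx y hy hxy
        have := hmono (hx.2 : x ≤ m) (hy.2 : y ≤ m) hxy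
        rwa [hFeq x hx.1, hFeq y hy.1] at this
      · intro x hx y hy hxy
        have := hanti hx hy hxy
        rwa [hFeq x (le_trans (le_of_lt hrm) hx), hFeq y (le_trans (le_of_lt hrm) hy)] at this
  · refine ⟨r, le_rfl, monotoneOn_Icc_self, Or.inr ?_⟩
    intro x hx y hy hxy
    have := hM hxy
    rwa [hFeq x hx, hFeq y hy] at this
  · refine ⟨r, le_rfl, monotoneOn_Icc_self, Or.inl ?_⟩
    intro x hx y hy hxy
    have := hA hxy
    rwa [hFeq x hx, hFeq y hy] at this

lemma halfLeft (hf : Continuous f) {r : ℝ} (h0 : f r = 0)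
    (hnn : ∀ x, x ≤ r → 0 ≤ f x)
    (hqc : ∀ x y z : ℝ, x < y → y < z → z ≤ r → min (f x) (f z) ≤ f y) :
    ∃ m, m ≤ r ∧ (MonotoneOn f (Set.Iic m) ∨ AntitoneOn f (Set.Iic m)) ∧
      AntitoneOn f (Set.Icc m r) := by
  set g : ℝ → ℝ := fun x => f (-x) with hg
  have hgc : Continuous g := hf.comp continuous_neg
  obtain ⟨m, hrm, hmono, hrest⟩ :=
    halfRight (f := g) hgc (r := -r) (by simp [hg, h0])
      (fun x hx => hnn _ (by linarith))
      (by
        intro x y z hx hxy hyz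
        have := hqc (-z) (-y) (-x) (by linarith) (by linarith) (by linarith)
        simp only [hg]
        rw [min_comm]
        exact this)
  refine ⟨-m, by linarith, ?_, ?_⟩
  · rcases hrest with h | h
    · left
      intro x hx y hy hxy
      have := h (show -y ∈ Set.Ici m from by simp only [Set.mem_Ici]; linarith [Set.mem_Iic.mp hy])
        (show -x ∈ Set.Ici m from by simp only [Set.mem_Ici]; linarith [Set.mem_Iic.mp hx])
        (by linarith)
      simpa [hg] using this
    · right
      intro x hx y hy hxy
      have := h (show -y ∈ Set.Ici m from by simp only [Set.mem_Ici]; linarith [Set.mem_Iic.mp hy])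
        (show -x ∈ Set.Ici m from by simp only [Set.mem_Ici]; linarith [Set.mem_Iic.mp hx])
        (by linarith)
      simpa [hg] using this
  · intro x hx y hy hxy
    have := hmono (show -y ∈ Set.Icc (-r) m from ⟨by linarith [hy.2], by linarith [hy.1]⟩)
      (show -x ∈ Set.Icc (-r) m from ⟨by linarith [hx.2], by linarith [hx.1]⟩)
      (by linarith)
    simpa [hg] using this

lemma monoGlue {p q r : ℝ} (hpq : p ≤ q) (hqr : q ≤ r)
    (h1 : MonotoneOn f (Set.Icc p q)) (h2 : MonotoneOn f (Set.Icc q r)) :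
    MonotoneOn f (Set.Icc p r) := by
  intro x hx y hy hxy
  rcases le_total y q with h | h
  · exact h1 ⟨hx.1, le_trans hxy h⟩ ⟨hy.1, h⟩ hxy
  · rcases le_total x q with h' | h'
    · exact le_trans (h1 ⟨hx.1, h'⟩ ⟨hpq, le_rfl⟩ h') (h2 ⟨le_rfl, hqr⟩ ⟨h, hy.2⟩ h)
    · exact h2 ⟨h', hx.2⟩ ⟨le_trans h' hxy, hy.2⟩ hxy

lemma antiGlue {p q r : ℝ} (hpq : p ≤ q) (hqr : q ≤ r)
    (h1 : AntitoneOn f (Set.Icc p q)) (h2 : AntitoneOn f (Set.Icc q r)) :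
    AntitoneOn f (Set.Icc p r) := by
  intro x hx y hy hxy
  rcases le_total y q with h | h
  · exact h1 ⟨hx.1, le_trans hxy h⟩ ⟨hy.1, h⟩ hxy
  · rcases le_total x q with h' | h'
    · exact le_trans (h2 ⟨le_rfl, hqr⟩ ⟨h, hy.2⟩ h) (h1 ⟨hx.1, h'⟩ ⟨hpq, le_rfl⟩ h')
    · exact h2 ⟨h', hx.2⟩ ⟨le_trans h' hxy, hy.2⟩ hxy

end AffEnvAux

/-- If `φ` is the everywhere-positive upper envelope (pointwise maximum) of a nonempty
finite family of affine functions, then the ratio `f(λ) = (a + λ·b)/φ(λ)` is piecewise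
monotone with at most three monotone pieces: there are `λ₁ ≤ λ₂` such that `f` is
monotone on `(−∞, λ₁]`, on `[λ₁, λ₂]`, and on `[λ₂, +∞)`. -/
theorem affine_over_envelope_three_monotone_pieces
    {T : Type*} [Fintype T] [Nonempty T] (c d : T → ℝ)
    (φ : ℝ → ℝ)
    (hφ : ∀ x : ℝ, φ x = Finset.univ.sup' Finset.univ_nonempty fun t : T => c t + x * d t)
    (hpos : ∀ x : ℝ, 0 < φ x) (a b : ℝ) :
    ∃ lam₁ lam₂ : ℝ, lam₁ ≤ lam₂ ∧
      (MonotoneOn (fun lam => (a + lam * b) / φ lam) (Set.Iic lam₁) ∨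
        AntitoneOn (fun lam => (a + lam * b) / φ lam) (Set.Iic lam₁)) ∧
      (MonotoneOn (fun lam => (a + lam * b) / φ lam) (Set.Icc lam₁ lam₂) ∨
        AntitoneOn (fun lam => (a + lam * b) / φ lam) (Set.Icc lam₁ lam₂)) ∧
      (MonotoneOn (fun lam => (a + lam * b) / φ lam) (Set.Ici lam₂) ∨
        AntitoneOn (fun lam => (a + lam * b) / φ lam) (Set.Ici lam₂)) := by
  classical
  set f : ℝ → ℝ := fun lam => (a + lam * b) / φ lam with hfdef
  -- continuity of φ and f
  have hφc : Continuous φ := by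
    have h1 : Continuous fun x : ℝ =>
        Finset.univ.sup' Finset.univ_nonempty fun t : T => c t + x * d t := by
      apply Continuous.finset_sup'_apply
      intro t _
      exact continuous_const.add (continuous_id.mul continuous_const)
    have h2 : φ = fun x : ℝ =>
        Finset.univ.sup' Finset.univ_nonempty fun t : T => c t + x * d t := funext hφ
    rw [h2]; exact h1
  have hfc : Continuous f :=
    (continuous_const.add (continuous_id.mul continuous_const)).div hφc
      (fun x => (hpos x).ne')
  -- convexity of φ
  have hconv : ∀ x y z : ℝ, x < y → y < z →
      (z - x) * φ y ≤ (z - y) * φ x + (y - x) * φ z := by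
    intro x y z hxy hyz
    have hzx : (0:ℝ) < z - x := by linarith
    have h : φ y ≤ ((z - y) * φ x + (y - x) * φ z) / (z - x) := by
      rw [hφ y]
      apply Finset.sup'_le
      intro t _
      have h1 : c t + x * d t ≤ φ x := by
        rw [hφ x]; exact Finset.le_sup' (fun s : T => c s + x * d s) (Finset.mem_univ t)
      have h2 : c t + z * d t ≤ φ z := by
        rw [hφ z]; exact Finset.le_sup' (fun s : T => c s + z * d s) (Finset.mem_univ t)
      rw [le_div_iff₀ hzx]
      nlinarith [h1, h2]
    rw [le_div_iff₀ hzx] at h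
    linarith
  -- quasiconcavity on nonnegative triples, for any affine numerator
  have key : ∀ A B : ℝ, ∀ x y z : ℝ, x < y → y < z →
      0 ≤ (A + x * B) / φ x → 0 ≤ (A + z * B) / φ z →
      min ((A + x * B) / φ x) ((A + z * B) / φ z) ≤ (A + y * B) / φ y := by
    intro A B x y z hxy hyz hx0 hz0
    set r := min ((A + x * B) / φ x) ((A + z * B) / φ z) with hr
    have hr0 : 0 ≤ r := le_min hx0 hz0
    have h1 : r * φ x ≤ A + x * B := by
      have := min_le_left ((A + x * B) / φ x) ((A + z * B) / φ z)
      rw [← hr] at this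
      rwa [le_div_iff₀ (hpos x)] at this
    have h2 : r * φ z ≤ A + z * B := by
      have := min_le_right ((A + x * B) / φ x) ((A + z * B) / φ z)
      rw [← hr] at this
      rwa [le_div_iff₀ (hpos z)] at this
    have hc := hconv x y z hxy hyz
    have hzx : (0:ℝ) < z - x := by linarith
    rw [le_div_iff₀ (hpos y)]
    have e1 : (z - y) * (r * φ x) ≤ (z - y) * (A + x * B) :=
      mul_le_mul_of_nonneg_left h1 (by linarith)
    have e2 : (y - x) * (r * φ z) ≤ (y - x) * (A + z * B) :=
      mul_le_mul_of_nonneg_left h2 (by linarith)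
    have e3 : r * ((z - x) * φ y) ≤ r * ((z - y) * φ x + (y - x) * φ z) :=
      mul_le_mul_of_nonneg_left hc hr0
    have e4 : (z - x) * (r * φ y) ≤ (z - x) * (A + y * B) := by nlinarith [e1, e2, e3]
    exact (mul_le_mul_iff_right₀ hzx).mp e4
  -- relation between f and the negated numerator version
  have hneg : ∀ lam : ℝ, (-a + lam * -b) / φ lam = -f lam := by
    intro lam
    rw [hfdef]
    rw [← neg_div]
    congr 1
    ring
  -- quasiconvexity on nonpositive triples
  have keyN : ∀ x y z : ℝ, x < y → y < z → f x ≤ 0 → f z ≤ 0 →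
      f y ≤ max (f x) (f z) := by
    intro x y z hxy hyz hx0 hz0
    have hx0' : 0 ≤ (-a + x * -b) / φ x := by rw [hneg x]; linarith
    have hz0' : 0 ≤ (-a + z * -b) / φ z := by rw [hneg z]; linarith
    have := key (-a) (-b) x y z hxy hyz hx0' hz0'
    rw [hneg x, hneg y, hneg z, min_neg_neg] at this
    linarith
  show AffEnvAux.ThreePieces f
  rcases lt_trichotomy b 0 with hb | hb | hb
  · -- b < 0 : f ≥ 0 on Iic lam0, f ≤ 0 on Ici lam0
    set lam0 : ℝ := -a / b with hlam0
    have hnum0 : a + lam0 * b = 0 := by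
      rw [hlam0, div_mul_cancel₀ _ (show b ≠ 0 by intro h; rw [h] at hb; exact lt_irrefl 0 hb)]; ring
    have h0 : f lam0 = 0 := by rw [hfdef]; simp [hnum0]
    have hsP : ∀ x, x ≤ lam0 → 0 ≤ f x := by
      intro x hx
      have h1 : lam0 * b ≤ x * b := mul_le_mul_of_nonpos_right hx (le_of_lt hb)
      have h2 : 0 ≤ a + x * b := by linarith
      exact div_nonneg h2 (le_of_lt (hpos x))
    have hsN : ∀ x, lam0 ≤ x → f x ≤ 0 := by
      intro x hx
      have h1 : x * b ≤ lam0 * b := mul_le_mul_of_nonpos_right hx (le_of_lt hb)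
      have h2 : a + x * b ≤ 0 := by linarith
      exact div_nonpos_iff.mpr (Or.inr ⟨h2, le_of_lt (hpos x)⟩)
    obtain ⟨m1, hm1, side1, anti1⟩ :=
      AffEnvAux.halfLeft hfc h0 hsP
        (fun x y z hxy hyz hz =>
          key a b x y z hxy hyz (hsP x (by linarith)) (hsP z hz))
    obtain ⟨m2, hm2, mono2, rest2⟩ :=
      AffEnvAux.halfRight (f := fun lam => -f lam) (r := lam0) hfc.neg
        (by simp [h0])
        (fun x hx => by have := hsN x hx; simpa using this)
        (by
          intro x y z hx hxy hyz
          have := keyN x y z hxy hyz (hsN x hx) (hsN z (by linarith))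
          show min (-f x) (-f z) ≤ -f y
          rw [min_neg_neg]
          linarith)
    have anti2 : AntitoneOn f (Set.Icc lam0 m2) := by
      intro x hx y hy hxy
      have := mono2 hx hy hxy
      simpa using this
    have rest2' : AntitoneOn f (Set.Ici m2) ∨ MonotoneOn f (Set.Ici m2) := by
      rcases rest2 with h | h
      · right; intro x hx y hy hxy; have := h hx hy hxy; simpa using this
      · left; intro x hx y hy hxy; have := h hx hy hxy; simpa using this
    refine ⟨m1, m2, le_trans hm1 hm2, side1, Or.inr (AffEnvAux.antiGlue hm1 hm2 anti1 anti2), ?_⟩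
    rcases rest2' with h | h
    · exact Or.inr h
    · exact Or.inl h
  · -- b = 0
    subst hb
    rcases le_or_gt 0 a with ha | ha
    · have hnn : ∀ x : ℝ, 0 ≤ f x := by
        intro x
        exact div_nonneg (by simpa using ha) (le_of_lt (hpos x))
      rcases AffEnvAux.trichotomy hfc
          (fun x y z hxy hyz => key a 0 x y z hxy hyz (hnn x) (hnn z)) with
        ⟨m, hmono, hanti⟩ | hM | hA
      · exact ⟨m, m, le_rfl, Or.inl hmono, Or.inl (hmono.mono (by
          intro x hx; exact hx.2)), Or.inr hanti⟩
      · exact ⟨0, 0, le_rfl, Or.inl (hM.monotoneOn _), Or.inl (hM.monotoneOn _),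
          Or.inl (hM.monotoneOn _)⟩
      · exact ⟨0, 0, le_rfl, Or.inr (hA.antitoneOn _), Or.inr (hA.antitoneOn _),
          Or.inr (hA.antitoneOn _)⟩
    · have hnp : ∀ x : ℝ, f x ≤ 0 := by
        intro x
        exact div_nonpos_iff.mpr (Or.inr ⟨by simpa using le_of_lt ha, le_of_lt (hpos x)⟩)
      rcases AffEnvAux.trichotomy (f := fun lam => -f lam) hfc.neg
          (fun x y z hxy hyz => by
            have := keyN x y z hxy hyz (hnp x) (hnp z)
            show min (-f x) (-f z) ≤ -f y
            rw [min_neg_neg]; linarith) with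
        ⟨m, hmono, hanti⟩ | hM | hA
      · refine ⟨m, m, le_rfl, Or.inr ?_, Or.inr ?_, Or.inl ?_⟩
        · intro x hx y hy hxy; have := hmono hx hy hxy; simpa using this
        · intro x hx y hy hxy
          have := hmono (Set.mem_Iic.mpr hx.2) (Set.mem_Iic.mpr hy.2) hxy
          simpa using this
        · intro x hx y hy hxy; have := hanti hx hy hxy; simpa using this
      · refine ⟨0, 0, le_rfl, Or.inr ?_, Or.inr ?_, Or.inr ?_⟩ <;>
          · intro x _ y _ hxy; have := hM hxy; simpa using this
      · refine ⟨0, 0, le_rfl, Or.inl ?_, Or.inl ?_, Or.inl ?_⟩ <;>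
          · intro x _ y _ hxy; have := hA hxy; simpa using this
  · -- b > 0 : f ≤ 0 on Iic lam0, f ≥ 0 on Ici lam0
    set lam0 : ℝ := -a / b with hlam0
    have hnum0 : a + lam0 * b = 0 := by
      rw [hlam0, div_mul_cancel₀ _ (show b ≠ 0 by intro h; rw [h] at hb; exact lt_irrefl 0 hb)]; ring
    have h0 : f lam0 = 0 := by rw [hfdef]; simp [hnum0]
    have hsP : ∀ x, lam0 ≤ x → 0 ≤ f x := by
      intro x hx
      have h1 : lam0 * b ≤ x * b := mul_le_mul_of_nonneg_right hx (le_of_lt hb)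
      have h2 : 0 ≤ a + x * b := by linarith
      exact div_nonneg h2 (le_of_lt (hpos x))
    have hsN : ∀ x, x ≤ lam0 → f x ≤ 0 := by
      intro x hx
      have h1 : x * b ≤ lam0 * b := mul_le_mul_of_nonneg_right hx (le_of_lt hb)
      have h2 : a + x * b ≤ 0 := by linarith
      exact div_nonpos_iff.mpr (Or.inr ⟨h2, le_of_lt (hpos x)⟩)
    obtain ⟨m1, hm1, side1, anti1⟩ :=
      AffEnvAux.halfLeft (f := fun lam => -f lam) (r := lam0) hfc.neg
        (by simp [h0])
        (fun x hx => by have := hsN x hx; simpa using this)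
        (by
          intro x y z hxy hyz hz
          have := keyN x y z hxy hyz (hsN x (by linarith)) (hsN z hz)
          show min (-f x) (-f z) ≤ -f y
          rw [min_neg_neg]
          linarith)
    obtain ⟨m2, hm2, mono2, rest2⟩ :=
      AffEnvAux.halfRight hfc h0 hsP
        (fun x y z hx hxy hyz =>
          key a b x y z hxy hyz (hsP x hx) (hsP z (by linarith)))
    have mono1 : MonotoneOn f (Set.Icc m1 lam0) := by
      intro x hx y hy hxy
      have := anti1 hx hy hxy
      simpa using this
    have side1' : MonotoneOn f (Set.Iic m1) ∨ AntitoneOn f (Set.Iic m1) := by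
      rcases side1 with h | h
      · right; intro x hx y hy hxy; have := h hx hy hxy; simpa using this
      · left; intro x hx y hy hxy; have := h hx hy hxy; simpa using this
    exact ⟨m1, m2, le_trans hm1 hm2, side1',
      Or.inl (AffEnvAux.monoGlue hm1 hm2 mono1 mono2), rest2.symm⟩
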